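/- Let (X,*) be a finite quandle and a ∈ X. Suppose that the cycles of the right translation R_a have pairwise distinct lengths (i.e., no two cycles in the disjoint cycle decomposition of R_a, counting fixed points as 1-cycles, have the same length), and that for every i ∈ X the only fixed point of R_i is i. Then the left translation L_a : X → X, j ↦ a*j, is a bijection of X, and the elements of every cycle of L_a are contained in some cycle of R_a; that is, for all x, y ∈ X, if y lies in the L_a-cycle of x (some iterate of L_a maps x to y), then y lies in the R_a-cycle of x. -/

import Mathlib

namespace QuandleRefineAux

variable {X : Type*}

/-- The right translation by `i`, as a permutation. -/
private noncomputable def col (op : X → X → X)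
    (hrinv : ∀ i : X, Function.Bijective (fun x => op x i)) (i : X) : Equiv.Perm X :=
  Equiv.ofBijective (fun x => op x i) (hrinv i)

private lemma col_apply (op : X → X → X)
    (hrinv : ∀ i : X, Function.Bijective (fun x => op x i)) (i z : X) :
    col op hrinv i z = op z i := rfl

/-- Conjugation identity: `R_{u*v} = R_v R_u R_v⁻¹`. -/
private lemma col_conj (op : X → X → X)
    (hrinv : ∀ i : X, Function.Bijective (fun x => op x i))
    (hdistrib : ∀ i j k : X, op (op i j) k = op (op i k) (op j k)) (u v : X) :
    col op hrinv (op u v) = col op hrinv v * col op hrinv u * (col op hrinv v)⁻¹ := by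
  ext z
  have hz : op ((col op hrinv v)⁻¹ z) v = z := (col op hrinv v).apply_symm_apply z
  calc col op hrinv (op u v) z = op z (op u v) := col_apply _ _ _ _
    _ = op (op ((col op hrinv v)⁻¹ z) v) (op u v) := by rw [hz]
    _ = op (op ((col op hrinv v)⁻¹ z) u) v := (hdistrib _ u v).symm
    _ = (col op hrinv v * col op hrinv u * (col op hrinv v)⁻¹) z := by
        simp [Equiv.Perm.mul_apply, col_apply]

/-- Iterating the basic translation is a quandle homomorphism. -/
private lemma hom_iter (op : X → X → X) (a : X)
    (hdistrib : ∀ i j k : X, op (op i j) k = op (op i k) (op j k)) :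
    ∀ (n : ℕ) (u v : X),
      (fun z => op z a)^[n] (op u v)
        = op ((fun z => op z a)^[n] u) ((fun z => op z a)^[n] v) := by
  intro n
  induction n with
  | zero => intro u v; simp
  | succ n ih =>
      intro u v
      simp only [Function.iterate_succ_apply']
      rw [ih u v]
      exact hdistrib _ _ _

private lemma iter_fix_a (op : X → X → X) (a : X) (hidem : op a a = a) :
    ∀ n : ℕ, (fun z => op z a)^[n] a = a := by
  intro n
  induction n with
  | zero => simp
  | succ n ih => simp only [Function.iterate_succ_apply']; rw [ih]; exact hidem

/-- Bridge between permutation powers and function iterates. -/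
private lemma col_pow_apply (op : X → X → X)
    (hrinv : ∀ i : X, Function.Bijective (fun x => op x i)) (a : X) :
    ∀ (n : ℕ) (z : X), ((col op hrinv a) ^ n) z = (fun z => op z a)^[n] z := by
  intro n
  induction n with
  | zero => intro z; simp
  | succ n ih =>
      intro z
      rw [pow_succ, Equiv.Perm.mul_apply, Function.iterate_succ_apply]
      exact ih (op z a)

/-- Conjugating a column by powers of `σ`. -/
private lemma col_iter (op : X → X → X)
    (hrinv : ∀ i : X, Function.Bijective (fun x => op x i))
    (hdistrib : ∀ i j k : X, op (op i j) k = op (op i k) (op j k)) (a : X) :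
    ∀ (n : ℕ) (z : X),
      col op hrinv ((fun y => op y a)^[n] z)
        = (col op hrinv a) ^ n * col op hrinv z * ((col op hrinv a) ^ n)⁻¹ := by
  intro n
  induction n with
  | zero => intro z; simp
  | succ n ih =>
      intro z
      rw [Function.iterate_succ_apply']
      rw [col_conj op hrinv hdistrib _ a, ih z]
      group

/-- Every point is periodic for the (bijective) basic translation. -/
private lemma periodic_all [Finite X] (op : X → X → X) (a : X)
    (hrinv : ∀ i : X, Function.Bijective (fun x => op x i)) (z : X) :
    z ∈ Function.periodicPts (fun z => op z a) := by
  obtain ⟨m, n, hmn, h⟩ :=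
    Finite.exists_ne_map_eq_of_infinite (fun k : ℕ => (fun z => op z a)^[k] z)
  rcases hmn.lt_or_gt with h' | h'
  · refine Function.mk_mem_periodicPts (Nat.sub_pos_of_lt h') ?_
    have hinj : Function.Injective ((fun z => op z a)^[m]) :=
      Function.Injective.iterate (hrinv a).injective m
    apply hinj
    have : (fun z => op z a)^[m] ((fun z => op z a)^[n - m] z)
        = (fun z => op z a)^[m + (n - m)] z := (Function.iterate_add_apply _ m (n - m) z).symm
    rw [this, Nat.add_sub_cancel' h'.le]
    exact h.symm
  · refine Function.mk_mem_periodicPts (Nat.sub_pos_of_lt h') ?_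
    have hinj : Function.Injective ((fun z => op z a)^[n]) :=
      Function.Injective.iterate (hrinv a).injective n
    apply hinj
    have : (fun z => op z a)^[n] ((fun z => op z a)^[m - n] z)
        = (fun z => op z a)^[n + (m - n)] z := (Function.iterate_add_apply _ n (m - n) z).symm
    rw [this, Nat.add_sub_cancel' h'.le]
    exact h

private lemma isPeriodic_of_dvd {f : X → X} {x : X} {m n : ℕ}
    (h : Function.IsPeriodicPt f m x) (hd : m ∣ n) : Function.IsPeriodicPt f n x := by
  obtain ⟨k, rfl⟩ := hd
  exact h.mul_const k

/-- Key lemma: the minimal period of `a * x` equals the minimal period of `x`. -/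
private lemma key [Finite X] (op : X → X → X) (a : X)
    (hidem : ∀ i : X, op i i = i)
    (hrinv : ∀ i : X, Function.Bijective (fun x => op x i))
    (hdistrib : ∀ i j k : X, op (op i j) k = op (op i k) (op j k))
    (hdist : ∀ x y : X,
      Function.minimalPeriod (fun z => op z a) x = Function.minimalPeriod (fun z => op z a) y →
      ∃ n : ℕ, (fun z => op z a)^[n] x = y)
    (hfix : ∀ i x : X, op x i = x → x = i) :
    ∀ x : X, Function.minimalPeriod (fun z => op z a) (op a x)
      = Function.minimalPeriod (fun z => op z a) x := by
  set f : X → X := fun z => op z a with hf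
  suffices H : ∀ (e : ℕ) (x : X), Function.minimalPeriod f (op a x) = e →
      Function.minimalPeriod f (op a x) = Function.minimalPeriod f x by
    intro x; exact H _ x rfl
  intro e
  induction e using Nat.strong_induction_on with
  | _ e IH =>
  intro x he
  set c : X := op a x with hc
  -- `e` is positive
  have hcper : c ∈ Function.periodicPts f := periodic_all op a hrinv c
  have hepos : 0 < e := he ▸ Function.minimalPeriod_pos_of_mem_periodicPts hcper
  -- `f^[e] c = c`
  have hfec : f^[e] c = c := by
    have := Function.isPeriodicPt_minimalPeriod f c
    rwa [show Function.minimalPeriod f c = e from he] at this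
  -- period of `a * c` divides `e`
  have haec : Function.IsPeriodicPt f e (op a c) := by
    show f^[e] (op a c) = op a c
    rw [hom_iter op a hdistrib e a c, iter_fix_a op a (hidem a) e, hfec]
  have he2dvd : Function.minimalPeriod f (op a c) ∣ e := haec.minimalPeriod_dvd
  -- by the induction hypothesis, the period of `a*c` is exactly `e`
  have he2 : Function.minimalPeriod f (op a c) = e := by
    by_contra hne
    have hlt : Function.minimalPeriod f (op a c) < e :=
      lt_of_le_of_ne (Nat.le_of_dvd hepos he2dvd) hne
    have := IH _ hlt c rfl
    rw [show Function.minimalPeriod f c = e from he] at this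
    exact hne this
  -- obtain the shift s with f^[s] c = a * c
  obtain ⟨s, hs⟩ := hdist c (op a c) (by rw [he2, he])
  -- permutations
  set S : Equiv.Perm X := col op hrinv a with hS
  set P : Equiv.Perm X := col op hrinv x with hP
  set C : Equiv.Perm X := col op hrinv c with hCdef
  -- the basic conjugation facts
  have h1 : C = P * S * P⁻¹ := by
    rw [hCdef, hc, hP, hS]; exact col_conj op hrinv hdistrib a x
  have hstar : S ^ s * C * (S ^ s)⁻¹ = C * S * C⁻¹ := by
    have h2 : col op hrinv (f^[s] c) = S ^ s * C * (S ^ s)⁻¹ := col_iter op hrinv hdistrib a s c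
    rw [hs] at h2
    rw [← h2, hCdef, hS]
    exact col_conj op hrinv hdistrib a c
  have hF4 : S ^ e * C * (S ^ e)⁻¹ = C := by
    have h2 : col op hrinv (f^[e] c) = S ^ e * C * (S ^ e)⁻¹ := col_iter op hrinv hdistrib a e c
    rw [hfec] at h2
    rw [← h2]
  -- derived multiplication facts
  have hPS : P * S = C * P := by rw [h1]; group
  have hPC : P⁻¹ * C = S * P⁻¹ := by rw [h1]; group
  have hSC : S ^ s * C = C * S * C⁻¹ * S ^ s := by
    have h2 : S ^ s * C * (S ^ s)⁻¹ * S ^ s = C * S * C⁻¹ * S ^ s := by rw [hstar]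
    calc S ^ s * C = S ^ s * C * (S ^ s)⁻¹ * S ^ s := by group
      _ = C * S * C⁻¹ * S ^ s := h2
  have hSeC : S ^ e * C = C * S ^ e := by
    have h2 : S ^ e * C * (S ^ e)⁻¹ * S ^ e = C * S ^ e := by rw [hF4]
    calc S ^ e * C = S ^ e * C * (S ^ e)⁻¹ * S ^ e := by group
      _ = C * S ^ e := h2
  -- Q commutes with S
  have hQcomm : (C⁻¹ * S ^ s * P) * S = S * (C⁻¹ * S ^ s * P) := by
    calc (C⁻¹ * S ^ s * P) * S = C⁻¹ * (S ^ s * C) * P := by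
          rw [show C⁻¹ * S ^ s * P * S = C⁻¹ * S ^ s * (P * S) from by group, hPS]; group
      _ = C⁻¹ * (C * S * C⁻¹ * S ^ s) * P := by rw [hSC]
      _ = S * (C⁻¹ * S ^ s * P) := by group
  -- T commutes with S
  have hTcomm : (P⁻¹ * S ^ e * P) * S = S * (P⁻¹ * S ^ e * P) := by
    calc (P⁻¹ * S ^ e * P) * S = P⁻¹ * (S ^ e * C) * P := by
          rw [show P⁻¹ * S ^ e * P * S = P⁻¹ * S ^ e * (P * S) from by group, hPS]; group
      _ = P⁻¹ * (C * S ^ e) * P := by rw [hSeC]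
      _ = (P⁻¹ * C) * S ^ e * P := by group
      _ = (S * P⁻¹) * S ^ e * P := by rw [hPC]
      _ = S * (P⁻¹ * S ^ e * P) := by group
  -- Q commutes with S^e
  have hQe : (C⁻¹ * S ^ s * P)⁻¹ * S ^ e * (C⁻¹ * S ^ s * P) = S ^ e := by
    have hcomm : Commute (C⁻¹ * S ^ s * P) S := hQcomm
    have h2 : (C⁻¹ * S ^ s * P) * S ^ e = S ^ e * (C⁻¹ * S ^ s * P) := (hcomm.pow_right e).eq
    calc (C⁻¹ * S ^ s * P)⁻¹ * S ^ e * (C⁻¹ * S ^ s * P)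
        = (C⁻¹ * S ^ s * P)⁻¹ * (S ^ e * (C⁻¹ * S ^ s * P)) := by group
      _ = (C⁻¹ * S ^ s * P)⁻¹ * ((C⁻¹ * S ^ s * P) * S ^ e) := by rw [h2]
      _ = S ^ e := by group
  -- decomposition of P
  have hPdec : P = (C⁻¹ * S ^ s * P) * (P⁻¹ * S ^ s * P)⁻¹ * S := by
    have h2 : (C⁻¹ * S ^ s * P) * (P⁻¹ * S ^ s * P)⁻¹ * S = C⁻¹ * (P * S) := by group
    rw [h2, hPS]; group
  -- main computation: T = S⁻¹ * (Ts * S^e * Ts⁻¹) * S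
  have hD : P⁻¹ * S ^ e * P
      = S⁻¹ * ((P⁻¹ * S ^ s * P) * S ^ e * (P⁻¹ * S ^ s * P)⁻¹) * S := by
    conv_lhs => rw [hPdec]
    have h2 : ((C⁻¹ * S ^ s * P) * (P⁻¹ * S ^ s * P)⁻¹ * S)⁻¹ * S ^ e
          * ((C⁻¹ * S ^ s * P) * (P⁻¹ * S ^ s * P)⁻¹ * S)
        = S⁻¹ * ((P⁻¹ * S ^ s * P)
          * ((C⁻¹ * S ^ s * P)⁻¹ * S ^ e * (C⁻¹ * S ^ s * P))
          * (P⁻¹ * S ^ s * P)⁻¹) * S := by group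
    rw [h2, hQe]
  -- W := Ts * S^e * Ts⁻¹ commutes with S
  have hW : ((P⁻¹ * S ^ s * P) * S ^ e * (P⁻¹ * S ^ s * P)⁻¹) * S
      = S * ((P⁻¹ * S ^ s * P) * S ^ e * (P⁻¹ * S ^ s * P)⁻¹) := by
    have hTc := hTcomm
    rw [hD] at hTc
    have h2 : S * ((S⁻¹ * ((P⁻¹ * S ^ s * P) * S ^ e * (P⁻¹ * S ^ s * P)⁻¹) * S) * S) * S⁻¹
        = S * (S * (S⁻¹ * ((P⁻¹ * S ^ s * P) * S ^ e * (P⁻¹ * S ^ s * P)⁻¹) * S)) * S⁻¹ := by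
      rw [hTc]
    calc ((P⁻¹ * S ^ s * P) * S ^ e * (P⁻¹ * S ^ s * P)⁻¹) * S
        = S * ((S⁻¹ * ((P⁻¹ * S ^ s * P) * S ^ e * (P⁻¹ * S ^ s * P)⁻¹) * S) * S) * S⁻¹ := by
          group
      _ = S * (S * (S⁻¹ * ((P⁻¹ * S ^ s * P) * S ^ e * (P⁻¹ * S ^ s * P)⁻¹) * S)) * S⁻¹ := h2
      _ = S * ((P⁻¹ * S ^ s * P) * S ^ e * (P⁻¹ * S ^ s * P)⁻¹) := by group
  -- hence T = W
  have hTW : P⁻¹ * S ^ e * P = (P⁻¹ * S ^ s * P) * S ^ e * (P⁻¹ * S ^ s * P)⁻¹ := by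
    rw [hD]
    calc S⁻¹ * ((P⁻¹ * S ^ s * P) * S ^ e * (P⁻¹ * S ^ s * P)⁻¹) * S
        = S⁻¹ * (((P⁻¹ * S ^ s * P) * S ^ e * (P⁻¹ * S ^ s * P)⁻¹) * S) := by group
      _ = S⁻¹ * (S * ((P⁻¹ * S ^ s * P) * S ^ e * (P⁻¹ * S ^ s * P)⁻¹)) := by rw [hW]
      _ = (P⁻¹ * S ^ s * P) * S ^ e * (P⁻¹ * S ^ s * P)⁻¹ := by group
  -- conclude: T = S^e
  have hfinal : P⁻¹ * S ^ e * P = S ^ e := by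
    have h5 : (P⁻¹ * S ^ s * P)⁻¹ * (P⁻¹ * S ^ e * P) * (P⁻¹ * S ^ s * P) = S ^ e := by
      rw [hTW]; group
    have h6 : (P⁻¹ * S ^ s * P)⁻¹ * (P⁻¹ * S ^ e * P) * (P⁻¹ * S ^ s * P)
        = P⁻¹ * ((S ^ s)⁻¹ * S ^ e * S ^ s) * P := by group
    have h7 : (S ^ s)⁻¹ * S ^ e * S ^ s = S ^ e := by
      have : Commute (S ^ s) (S ^ e) := Commute.pow_pow_self S s e
      calc (S ^ s)⁻¹ * S ^ e * S ^ s = (S ^ s)⁻¹ * (S ^ e * S ^ s) := by group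
        _ = (S ^ s)⁻¹ * (S ^ s * S ^ e) := by rw [this.eq]
        _ = S ^ e := by group
    have h8 : (P⁻¹ * S ^ s * P)⁻¹ * (P⁻¹ * S ^ e * P) * (P⁻¹ * S ^ s * P)
        = P⁻¹ * S ^ e * P := by rw [h6, h7]
    exact h8.symm.trans h5
  -- pointwise consequence at x : f^[e] x = x
  have hcomm2 : S ^ e * P = P * S ^ e := by
    calc S ^ e * P = P * (P⁻¹ * S ^ e * P) := by group
      _ = P * S ^ e := by rw [hfinal]
  have hpt : op (f^[e] x) x = f^[e] x := by
    have h2 := DFunLike.congr_fun hcomm2 x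
    simp only [Equiv.Perm.mul_apply] at h2
    have hPx : P x = x := by
      rw [hP, col_apply]; exact hidem x
    have hb : (S ^ e) x = f^[e] x := by
      rw [hS]; exact col_pow_apply op hrinv a e x
    rw [hPx, hb] at h2
    have h3 : P (f^[e] x) = op (f^[e] x) x := by
      rw [hP, col_apply]
    rw [h3] at h2
    exact h2.symm
  have hfex : f^[e] x = x := hfix x (f^[e] x) hpt
  -- divisibility both ways
  have hd1 : Function.minimalPeriod f x ∣ e := Function.IsPeriodicPt.minimalPeriod_dvd hfex
  have hd2 : e ∣ Function.minimalPeriod f x := by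
    have hx : f^[Function.minimalPeriod f x] x = x := Function.isPeriodicPt_minimalPeriod f x
    have : Function.IsPeriodicPt f (Function.minimalPeriod f x) (op a x) := by
      show f^[Function.minimalPeriod f x] (op a x) = op a x
      rw [hom_iter op a hdistrib _ a x, iter_fix_a op a (hidem a) _, hx]
    have := this.minimalPeriod_dvd
    rwa [← hc, he] at this
  rw [he]
  exact Nat.dvd_antisymm hd2 hd1

end QuandleRefineAux

/-- Let `(X, *)` be a finite quandle and `a ∈ X`. If the cycles of the right translation
`R_a` have pairwise distinct lengths (any two elements with the same minimal period under
`R_a` lie in the same cycle of `R_a`), and every right translation `R_i` has `i` as its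
only fixed point, then the left translation `L_a` is a bijection and every cycle of `L_a`
is contained in a cycle of `R_a`. -/
theorem left_translation_bijective_and_refines
    {X : Type*} [Finite X] (op : X → X → X) (a : X)
    (hidem : ∀ i : X, op i i = i)
    (hrinv : ∀ i : X, Function.Bijective (fun x => op x i))
    (hdistrib : ∀ i j k : X, op (op i j) k = op (op i k) (op j k))
    (hdist : ∀ x y : X,
      Function.minimalPeriod (fun z => op z a) x = Function.minimalPeriod (fun z => op z a) y →
      ∃ n : ℕ, (fun z => op z a)^[n] x = y)
    (hfix : ∀ i x : X, op x i = x → x = i) :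
    Function.Bijective (fun j => op a j) ∧
      ∀ x y : X, (∃ n : ℕ, (fun j => op a j)^[n] x = y) →
        ∃ m : ℕ, (fun z => op z a)^[m] x = y := by
  have key := QuandleRefineAux.key op a hidem hrinv hdistrib hdist hfix
  set f : X → X := fun z => op z a with hf
  constructor
  · -- bijectivity of the left translation
    rw [← Finite.injective_iff_bijective]
    intro u v huv
    simp only at huv
    -- equal minimal periods
    have hper : Function.minimalPeriod f u = Function.minimalPeriod f v := by
      rw [← key u, ← key v, huv]
    obtain ⟨n, hn⟩ := hdist u v hper
    have hper2 : Function.IsPeriodicPt f n (op a u) := by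
      show f^[n] (op a u) = op a u
      rw [QuandleRefineAux.hom_iter op a hdistrib n a u,
        QuandleRefineAux.iter_fix_a op a (hidem a) n, hn, huv]
    have hdvd : Function.minimalPeriod f u ∣ n := by
      have := hper2.minimalPeriod_dvd
      rwa [key u] at this
    have hnu : f^[n] u = u :=
      QuandleRefineAux.isPeriodic_of_dvd (Function.isPeriodicPt_minimalPeriod f u) hdvd
    rw [← hn, hnu]
  · -- cycles of the left translation refine cycles of the right translation
    intro x y ⟨n, hn⟩
    induction n generalizing y with
    | zero => exact ⟨0, by simpa using hn⟩
    | succ n ih =>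
        rw [Function.iterate_succ_apply'] at hn
        obtain ⟨m, hm⟩ := ih _ rfl
        have hper : Function.minimalPeriod f ((fun j => op a j)^[n] x)
            = Function.minimalPeriod f (op a ((fun j => op a j)^[n] x)) :=
          (key _).symm
        obtain ⟨m₂, hm₂⟩ := hdist _ _ hper
        refine ⟨m₂ + m, ?_⟩
        rw [Function.iterate_add_apply, hm, hm₂, hn]
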